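/- Let P be a simple n-polytope obtained from a simple n-polytope Q by forgetting one of the defining inequalities (so Q has facets F₁,...,F_{m-1}, P has facets F₁,...,F_m, and every vertex of P either is a vertex of Q or lies on F_m and is connected by an edge of P to a vertex of Q). If M is an (m-1)×s integer matrix such that for every vertex F_{i₁}∩...∩F_{i_n} of Q, the columns of M with those n rows deleted extend to a basis of Z^{m-1-n}, then the m×s matrix M̂ obtained by appending a zero row has the property that for every vertex of P, deleting the corresponding n rows leaves columns extending to a basis of Z^{m-n}. Consequently s(P) ≥ s(Q). -/

import Mathlib

/-- A family of vectors is part of a basis if it can be extended to a basis. -/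
def IsPartOfBasis (R : Type) [Semiring R] {M : Type} [AddCommMonoid M] [Module R M]
    {ι : Type} (v : ι → M) : Prop :=
  ∃ (κ : Type) (b : Module.Basis (ι ⊕ κ) R M), ∀ i, b (Sum.inl i) = v i

/-- Buchstaber number in the matrix characterization: the maximal `s ≤ #facets` for which
there is a matrix `M` (rows indexed by facets, `s` columns, integer entries) such that
for every vertex `V` (the set of facets containing it), the columns of `M` with the rows
of `V` deleted extend to a basis of the corresponding free module. -/
noncomputable def buch (ι : Type) [Fintype ι] [DecidableEq ι]
    (verts : Finset (Finset ι)) : ℕ :=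
  sSup {s : ℕ | s ≤ Fintype.card ι ∧ ∃ M : ι → Fin s → ℤ,
    ∀ V ∈ verts, IsPartOfBasis ℤ (fun j : Fin s => fun i : {i : ι // i ∉ V} => M i.1 j)}


lemma part_map {R : Type} [CommRing R] {N N' : Type} [AddCommGroup N] [Module R N]
    [AddCommGroup N'] [Module R N']
    {ι : Type} (L : N ≃ₗ[R] N') (v : ι → N) (hv : IsPartOfBasis R v) :
    IsPartOfBasis R (fun i => L (v i)) := by
  obtain ⟨κ, b, hb⟩ := hv
  exact ⟨κ, b.map L, fun i => by simp [hb]⟩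

lemma part_prod {R : Type} [CommRing R] {N : Type} [AddCommGroup N] [Module R N] {ι : Type}
    (v : ι → N) (hv : IsPartOfBasis R v) (c : ι → R) :
    IsPartOfBasis R (fun i => ((v i, c i) : N × R)) := by
  classical
  obtain ⟨κ, b, hb⟩ := hv
  let φ : N →ₗ[R] R := b.constr R (Sum.elim c 0)
  let f : N × R →ₗ[R] N × R :=
    LinearMap.prod (LinearMap.fst R N R) (LinearMap.snd R N R + φ.comp (LinearMap.fst R N R))
  let g : N × R →ₗ[R] N × R :=
    LinearMap.prod (LinearMap.fst R N R) (LinearMap.snd R N R - φ.comp (LinearMap.fst R N R))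
  let E : (N × R) ≃ₗ[R] (N × R) := LinearEquiv.ofLinear f g
    (by apply LinearMap.ext; rintro ⟨x, t⟩; simp [f, g])
    (by apply LinearMap.ext; rintro ⟨x, t⟩; simp [f, g])
  refine ⟨κ ⊕ Unit, ((b.prod (Module.Basis.singleton Unit R)).map E).reindex (Equiv.sumAssoc ι κ Unit), ?_⟩
  intro i
  simp [E, f, φ, hb, Module.Basis.prod_apply]
  rw [← hb i]
  simp
  -- fix: finish with constr_basis

lemma part_sum {R : Type} [CommRing R] {β γ : Type} (e : β ⊕ Unit ≃ γ) {ι : Type}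
    (v : ι → β → R) (c : ι → R) (hv : IsPartOfBasis R v) :
    IsPartOfBasis R (fun j (i : γ) => Sum.elim (v j) (fun _ => c j) (e.symm i)) := by
  have h1 := part_prod v hv c
  let L : ((β → R) × R) ≃ₗ[R] (γ → R) :=
    (LinearEquiv.prodCongr (LinearEquiv.refl R (β → R)) (LinearEquiv.funUnique Unit R R).symm) ≪≫ₗ
    (LinearEquiv.sumArrowLequivProdArrow β Unit R R).symm ≪≫ₗ
    LinearEquiv.funCongrLeft R R e.symm
  have h2 := part_map L _ h1
  convert h2 using 1 <;> rfl

lemma part_zero {α : Type} [Fintype α] (v : Fin 0 → α → ℤ) : IsPartOfBasis ℤ v :=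
  ⟨α, (Pi.basisFun ℤ α).reindex (Equiv.emptySum (Fin 0) α).symm, fun i => i.elim0⟩

lemma main_aux (m n s : ℕ) (hn : 0 < n) (f₀ : Fin m)
    (vertsP : Finset (Finset (Fin m)))
    (vertsQ : Finset (Finset {i : Fin m // i ≠ f₀}))
    (hP : ∀ V ∈ vertsP, V.card = n ∧
      ((f₀ ∉ V ∧ V.subtype (· ≠ f₀) ∈ vertsQ) ∨
       (f₀ ∈ V ∧ ∃ W ∈ vertsQ, (V.erase f₀).subtype (· ≠ f₀) ⊆ W)))
    (hQcard : ∀ W ∈ vertsQ, W.card = n)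
    (M : {i : Fin m // i ≠ f₀} → Fin s → ℤ)
    (hM : ∀ W ∈ vertsQ, IsPartOfBasis ℤ
      (fun j : Fin s => fun i : {i : {i : Fin m // i ≠ f₀} // i ∉ W} => M i.1 j)) :
    ∀ V ∈ vertsP, IsPartOfBasis ℤ
      (fun j : Fin s => fun i : {i : Fin m // i ∉ V} =>
        if h : i.1 = f₀ then 0 else M ⟨i.1, h⟩ j) := by
  intro V hV
  obtain ⟨hVcard, hcase⟩ := hP V hV
  rcases hcase with ⟨hf₀, hWmem⟩ | ⟨hf₀, W, hWmem, hsub⟩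
  · -- Case 1: f₀ ∉ V
    set W : Finset {i : Fin m // i ≠ f₀} := V.subtype (· ≠ f₀) with hWdef
    have hWiff : ∀ a : {i : Fin m // i ≠ f₀}, a ∈ W ↔ a.1 ∈ V := by
      intro a; rw [hWdef]; exact Finset.mem_subtype
    let e : {i : {i : Fin m // i ≠ f₀} // i ∉ W} ⊕ Unit ≃ {i : Fin m // i ∉ V} :=
      { toFun := Sum.elim
          (fun b => ⟨b.1.1, fun hbV => b.2 ((hWiff b.1).mpr hbV)⟩)
          (fun _ => ⟨f₀, hf₀⟩)
        invFun := fun i => if h : i.1 = f₀ then Sum.inr () else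
          Sum.inl ⟨⟨i.1, h⟩, fun hmem => i.2 ((hWiff _).mp hmem)⟩
        left_inv := by
          rintro (⟨⟨b, hb⟩, hbW⟩ | ⟨⟩)
          · simp [hb]
          · simp
        right_inv := by
          rintro ⟨i, hi⟩
          by_cases h : i = f₀ <;> simp [h] }
    have h1 := part_sum e (fun j (b : {i : {i : Fin m // i ≠ f₀} // i ∉ W}) => M b.1 j)
      (fun _ => 0) (hM W hWmem)
    convert h1 using 1
    · rfl
    · rfl
    funext j i
    by_cases h : i.1 = f₀
    · simp [e, h]
    · simp [e, h]
  · -- Case 2: f₀ ∈ V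
    set V' : Finset {i : Fin m // i ≠ f₀} := (V.erase f₀).subtype (· ≠ f₀) with hV'def
    have hV'card : V'.card = n - 1 := by
      rw [hV'def, Finset.card_subtype]
      rw [Finset.filter_true_of_mem (fun x hx => (Finset.mem_erase.mp hx).1)]
      rw [Finset.card_erase_of_mem hf₀, hVcard]
    have hWcard : W.card = n := hQcard W hWmem
    have hss : V' ⊂ W := Finset.ssubset_iff_subset_ne.mpr ⟨hsub,
      by intro h; rw [h, hWcard] at hV'card; omega⟩
    obtain ⟨w, hwW, hwV'⟩ := Finset.exists_of_ssubset hss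
    have hWeq : insert w V' = W := by
      apply Finset.eq_of_subset_of_card_le
      · exact Finset.insert_subset hwW hsub
      · rw [Finset.card_insert_of_notMem hwV', hV'card, hWcard]; omega
    have hwV : w.1 ∉ V := by
      intro hw
      exact hwV' (Finset.mem_subtype.mpr (Finset.mem_erase.mpr ⟨w.2, hw⟩))
    have hne : ∀ i : Fin m, i ∉ V → i ≠ f₀ := fun i hi h => hi (h ▸ hf₀)
    have hnW : ∀ (i : Fin m) (hiV : i ∉ V), i ≠ w.1 →
        (⟨i, hne i hiV⟩ : {i : Fin m // i ≠ f₀}) ∉ W := by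
      intro i hiV hiw hmem
      rw [← hWeq, Finset.mem_insert] at hmem
      rcases hmem with h | h
      · exact hiw (congrArg Subtype.val h)
      · exact hiV (Finset.mem_of_mem_erase (Finset.mem_subtype.mp h))
    have hbV : ∀ b : {i : {i : Fin m // i ≠ f₀} // i ∉ W}, b.1.1 ∉ V := by
      intro b hmem
      exact b.2 (hsub (Finset.mem_subtype.mpr (Finset.mem_erase.mpr ⟨b.1.2, hmem⟩)))
    have hbw : ∀ b : {i : {i : Fin m // i ≠ f₀} // i ∉ W}, b.1.1 ≠ w.1 := by
      intro b h
      exact b.2 (Subtype.ext h ▸ hwW)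
    let e : {i : {i : Fin m // i ≠ f₀} // i ∉ W} ⊕ Unit ≃ {i : Fin m // i ∉ V} :=
      { toFun := Sum.elim (fun b => ⟨b.1.1, hbV b⟩) (fun _ => ⟨w.1, hwV⟩)
        invFun := fun i => if h : i.1 = w.1 then Sum.inr () else
          Sum.inl ⟨⟨i.1, hne i.1 i.2⟩, hnW i.1 i.2 h⟩
        left_inv := by
          rintro (⟨⟨b, hb⟩, hbW⟩ | ⟨⟩)
          · simp [hbw ⟨⟨b, hb⟩, hbW⟩]
          · simp
        right_inv := by
          rintro ⟨i, hi⟩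
          by_cases h : i = w.1 <;> simp [h] }
    have h1 := part_sum e (fun j (b : {i : {i : Fin m // i ≠ f₀} // i ∉ W}) => M b.1 j)
      (fun j => M w j) (hM W hWmem)
    convert h1 using 1
    · rfl
    · rfl
    funext j i
    by_cases h : i.1 = w.1
    · have : (⟨i.1, hne i.1 i.2⟩ : {i : Fin m // i ≠ f₀}) = w := Subtype.ext h
      simp [e, h, hne i.1 i.2, this, w.2]
    · simp [e, h, hne i.1 i.2]

/-- If the simple polytope `P` is obtained from `Q` by forgetting one inequality (with new
facet `f₀`), then any matrix `M` witnessing a freely acting subtorus for `Q` extends by a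
zero row to a witness for `P`; consequently `s(Q) ≤ s(P)`. -/
theorem buchstaber_of_forgetting_inequality (m n s : ℕ) (hn : 0 < n) (f₀ : Fin m)
    (vertsP : Finset (Finset (Fin m)))
    (vertsQ : Finset (Finset {i : Fin m // i ≠ f₀}))
    (hPne : vertsP.Nonempty) (hQne : vertsQ.Nonempty)
    (hQcard : ∀ W ∈ vertsQ, W.card = n)
    (hP : ∀ V ∈ vertsP, V.card = n ∧
      ((f₀ ∉ V ∧ V.subtype (· ≠ f₀) ∈ vertsQ) ∨
       (f₀ ∈ V ∧ ∃ W ∈ vertsQ, (V.erase f₀).subtype (· ≠ f₀) ⊆ W)))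
    (M : {i : Fin m // i ≠ f₀} → Fin s → ℤ)
    (hM : ∀ W ∈ vertsQ, IsPartOfBasis ℤ
      (fun j : Fin s => fun i : {i : {i : Fin m // i ≠ f₀} // i ∉ W} => M i.1 j)) :
    (∀ V ∈ vertsP, IsPartOfBasis ℤ
      (fun j : Fin s => fun i : {i : Fin m // i ∉ V} =>
        if h : i.1 = f₀ then 0 else M ⟨i.1, h⟩ j)) ∧
    buch {i : Fin m // i ≠ f₀} vertsQ ≤ buch (Fin m) vertsP := by
  constructor
  · exact main_aux m n s hn f₀ vertsP vertsQ hP hQcard M hM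
  · unfold buch
    apply csSup_le_csSup
    · exact ⟨Fintype.card (Fin m), fun x hx => hx.1⟩
    · refine ⟨0, Nat.zero_le _, fun _ j => j.elim0, fun V hV => part_zero _⟩
    · rintro s' ⟨hle, M', hM'⟩
      refine ⟨hle.trans (Fintype.card_subtype_le _), fun i j => if h : i = f₀ then 0 else M' ⟨i, h⟩ j, ?_⟩
      exact main_aux m n s' hn f₀ vertsP vertsQ hP hQcard M' hM'
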